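/- Let g be a polynomial over K with all coefficients in O_K and whose leading coefficient has absolute value 1. Then the set of roots of the reduction ḡ ∈ (O_K/m_K)[z] equals the image under the reduction map O_K → O_K/m_K of the set of roots of g (all of which lie in O_K). That is, {z̄ : z ∈ K, g(z) = 0} = {α ∈ O_K/m_K : ḡ(α) = 0}. -/

import Mathlib

/-- The valuation ring `O_K = {x : K | v x ≤ 1}` of a non-archimedean absolute value. -/
def valRing {K : Type*} [Field K] (v : AbsoluteValue K ℝ)
    (hna : IsNonarchimedean v) : Subring K where
  carrier := {x : K | v x ≤ 1}
  zero_mem' := by simp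
  one_mem' := by simp [v.map_one]
  add_mem' := fun {a b} ha hb => le_trans (hna a b) (max_le ha hb)
  mul_mem' := fun {a b} ha hb => by
    simp only [Set.mem_setOf_eq, v.map_mul] at *
    exact mul_le_one₀ ha (v.nonneg b) hb
  neg_mem' := fun {a} ha => by simpa [v.map_neg] using ha

/-- The maximal ideal `m_K = {x : O_K | v x < 1}` of the valuation ring. -/
def maxIdeal {K : Type*} [Field K] (v : AbsoluteValue K ℝ)
    (hna : IsNonarchimedean v) : Ideal (valRing v hna) where
  carrier := {x : valRing v hna | v (x : K) < 1}
  zero_mem' := by simp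
  add_mem' := fun {a b} ha hb => lt_of_le_of_lt (hna _ _) (max_lt ha hb)
  smul_mem' := fun c x hx => by
    simp only [Set.mem_setOf_eq, smul_eq_mul, Subring.coe_mul, v.map_mul] at *
    calc v (c : K) * v (x : K) ≤ 1 * v (x : K) :=
          mul_le_mul_of_nonneg_right c.2 (v.nonneg _)
      _ = v (x : K) := one_mul _
      _ < 1 := hx

/-- For a polynomial `g` with coefficients in `O_K` whose leading coefficient has absolute
value `1`: all roots of `g` in `K` lie in `O_K`, and the set of roots of the reduction
`ḡ ∈ (O_K/m_K)[z]` is exactly the image of the set of roots of `g` under reduction. -/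
theorem roots_of_reduction {K : Type*} [Field K] [IsAlgClosed K] [CharZero K]
    (v : AbsoluteValue K ℝ) (hna : IsNonarchimedean v)
    (g : Polynomial (valRing v hna)) (hg : g ≠ 0)
    (hlead : v ((g.leadingCoeff : K)) = 1) :
    (∀ z : K, (g.map (valRing v hna).subtype).IsRoot z → v z ≤ 1) ∧
    {α : valRing v hna ⧸ maxIdeal v hna |
        (g.map (Ideal.Quotient.mk (maxIdeal v hna))).IsRoot α} =
      (fun z : valRing v hna => Ideal.Quotient.mk (maxIdeal v hna) z) ''
        {z : valRing v hna | g.IsRoot z} := by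
  classical
  set G := g.map (valRing v hna).subtype with hGdef
  have hinj : Function.Injective (valRing v hna).subtype := Subtype.coe_injective
  have hGne : G ≠ 0 := (Polynomial.map_ne_zero_iff hinj).mpr hg
  have hGdeg : G.natDegree = g.natDegree := Polynomial.natDegree_map_eq_of_injective hinj g
  have hGlead : G.leadingCoeff = (g.leadingCoeff : K) := Polynomial.leadingCoeff_map_of_injective hinj g
  have hcoeff : ∀ i, G.coeff i = (g.coeff i : K) := fun i => Polynomial.coeff_map _ i
  -- Part 1 : all roots of G are in the valuation ring
  have part1 : ∀ z : K, G.IsRoot z → v z ≤ 1 := by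
    intro z hz
    by_contra hvz
    push_neg at hvz
    set n := g.natDegree with hn
    have heval : (∑ i ∈ Finset.range (n + 1), G.coeff i * z ^ i) = 0 := by
      rw [← Polynomial.eval_eq_sum_range' (show G.natDegree < n + 1 by
        rw [hGdeg, hn]; exact Nat.lt_succ_self _)]
      exact hz
    rw [Finset.sum_range_succ] at heval
    have hcn : G.coeff n = (g.leadingCoeff : K) := by
      rw [← hGlead, ← hGdeg]; exact Polynomial.coeff_natDegree
    have hkey : v ((g.leadingCoeff : K) * z ^ n) =
        v (∑ i ∈ Finset.range n, G.coeff i * z ^ i) := by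
      have : (g.leadingCoeff : K) * z ^ n = -(∑ i ∈ Finset.range n, G.coeff i * z ^ i) := by
        rw [← hcn]; linear_combination heval
      rw [this, v.map_neg]
    have hlhs : v ((g.leadingCoeff : K) * z ^ n) = v z ^ n := by
      rw [v.map_mul, hlead, one_mul, v.map_pow]
    rcases Nat.eq_zero_or_pos n with h0 | hpos
    · rw [h0] at hkey hlhs
      simp only [Finset.range_zero, Finset.sum_empty, v.map_zero] at hkey
      rw [hkey] at hlhs
      simp at hlhs
    · obtain ⟨b, hb, hble⟩ := IsNonarchimedean.finset_image_add_of_nonempty hna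
        (fun i => G.coeff i * z ^ i) (Finset.nonempty_range_iff.mpr hpos.ne')
      rw [Finset.mem_range] at hb
      have hcb : v (G.coeff b) ≤ 1 := by rw [hcoeff]; exact (g.coeff b).2
      have h1 : v (G.coeff b * z ^ b) ≤ v z ^ b := by
        rw [v.map_mul, v.map_pow]
        exact mul_le_of_le_one_left (pow_nonneg (v.nonneg z) b) hcb
      have h2 : v z ^ b < v z ^ n := pow_lt_pow_right₀ hvz hb
      have : v z ^ n < v z ^ n := by
        calc v z ^ n = v (∑ i ∈ Finset.range n, G.coeff i * z ^ i) := by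
              rw [← hlhs, hkey]
          _ ≤ v (G.coeff b * z ^ b) := hble
          _ ≤ v z ^ b := h1
          _ < v z ^ n := h2
      exact lt_irrefl _ this
  refine ⟨part1, ?_⟩
  -- Part 2
  have hsplit : G.Splits := IsAlgClosed.splits G
  ext α
  simp only [Set.mem_setOf_eq, Set.mem_image]
  constructor
  · intro hα
    obtain ⟨a, rfl⟩ := Ideal.Quotient.mk_surjective α
    -- g.eval a maps to zero in the quotient
    have hmk : Ideal.Quotient.mk (maxIdeal v hna) (g.eval a) = 0 := by
      have := hα
      rw [Polynomial.IsRoot, Polynomial.eval_map, Polynomial.eval₂_at_apply] at this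
      exact this
    have hmem : g.eval a ∈ maxIdeal v hna := (Ideal.Quotient.eq_zero_iff_mem).mp hmk
    have hlt : v ((g.eval a : valRing v hna) : K) < 1 := hmem
    -- evaluate G at a via the product of roots
    have hGeval : G.eval (a : K) = ((g.eval a : valRing v hna) : K) := by
      rw [hGdef, Polynomial.eval_map]
      exact Polynomial.eval₂_at_apply _ a
    have hprod : G.eval (a : K) =
        G.leadingCoeff * (G.roots.map fun r => (a : K) - r).prod :=
      hsplit.eval_eq_prod_roots _
    have hvprod : (G.roots.map fun r => v ((a : K) - r)).prod < 1 := by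
      have h1 : v (G.eval (a : K)) < 1 := by rw [hGeval]; exact hlt
      rw [hprod, v.map_mul, hGlead, hlead, one_mul, map_multiset_prod,
        Multiset.map_map] at h1
      exact h1
    -- find a root close to a
    have hex : ∃ r ∈ G.roots, v ((a : K) - r) < 1 := by
      by_contra hcon
      push_neg at hcon
      have : (1 : ℝ) ≤ (G.roots.map fun r => v ((a : K) - r)).prod := by
        refine Multiset.prod_induction _ _ (fun x y hx hy => ?_) le_rfl ?_
        · exact by nlinarith
        · intro x hx
          obtain ⟨r, hr, rfl⟩ := Multiset.mem_map.mp hx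
          exact hcon r hr
      linarith
    obtain ⟨r, hr, hrlt⟩ := hex
    have hroot : G.IsRoot r := Polynomial.isRoot_of_mem_roots hr
    have hrR : v r ≤ 1 := part1 r hroot
    refine ⟨⟨r, hrR⟩, ?_, ?_⟩
    · -- g.IsRoot ⟨r, hrR⟩
      have : (valRing v hna).subtype (g.eval (⟨r, hrR⟩ : valRing v hna)) = 0 := by
        have h0 : G.eval r = 0 := hroot
        rw [hGdef, Polynomial.eval_map] at h0
        exact (Polynomial.eval₂_at_apply (valRing v hna).subtype
          (⟨r, hrR⟩ : valRing v hna)).symm.trans h0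
      exact hinj (by simpa using this)
    · -- mk ⟨r, hrR⟩ = mk a
      rw [Ideal.Quotient.eq]
      show v (((⟨r, hrR⟩ : valRing v hna) - a : valRing v hna) : K) < 1
      have : (((⟨r, hrR⟩ : valRing v hna) - a : valRing v hna) : K) = -(((a : K)) - r) := by
        push_cast; ring
      rw [this, v.map_neg]
      exact hrlt
  · rintro ⟨z, hz, rfl⟩
    show Polynomial.IsRoot _ _
    rw [Polynomial.IsRoot, Polynomial.eval_map, Polynomial.eval₂_at_apply, hz,
      map_zero]
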